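/- Let p ≥ 3 and let λ, μ be strict partitions of n each with at most two parts, λ = (λ_1, λ_2), μ = (μ_1, μ_2), both satisfying λ_1 − λ_2 ≥ p + δ_{p|λ_1} and μ_1 − μ_2 ≥ p + δ_{p|μ_1} (where λ_2, μ_2 ≥ 0 and a zero second part means a one-part partition). Then β_{λ_1} + β_{λ_2} ⊴ β_{μ_1} + β_{μ_2} in the dominance order if and only if λ_1 ≥ μ_1. -/

import Mathlib

/-- A partition: weakly decreasing list of positive integers. -/
def IsPartition (l : List ℕ) : Prop :=
  l.Pairwise (· ≥ ·) ∧ ∀ x ∈ l, 0 < x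

/-- A strict partition: strictly decreasing list of positive integers. -/
def StrictPartition (l : List ℕ) : Prop :=
  l.Pairwise (· > ·) ∧ ∀ x ∈ l, 0 < x

/-- `p`-strict: equal consecutive parts are divisible by `p`
(parts indexed with trailing zeros appended). -/
def PStrict (p : ℕ) (l : List ℕ) : Prop :=
  ∀ r, l.getD r 0 = l.getD (r+1) 0 → p ∣ l.getD r 0

/-- `p`-restricted: consecutive differences are at most `p - δ_{p ∣ part}`. -/
def PRestricted (p : ℕ) (l : List ℕ) : Prop :=
  ∀ r, l.getD r 0 - l.getD (r+1) 0 ≤ p - (if p ∣ l.getD r 0 then 1 else 0)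

/-- `RP p n l`: `l` is a `p`-strict `p`-restricted partition of `n`. -/
def RP (p n : ℕ) (l : List ℕ) : Prop :=
  IsPartition l ∧ l.sum = n ∧ PStrict p l ∧ PRestricted p l

/-- The basic spin partition `β_n`. -/
def beta (p n : ℕ) : List ℕ :=
  if n = 0 then []
  else if n % p = 0 then List.replicate (n / p - 1) p ++ [p - 1, 1]
  else List.replicate (n / p) p ++ [n % p]

/-- Number of parts not divisible by `p`. -/
def hp' (p : ℕ) (l : List ℕ) : ℕ :=
  (l.filter (fun x => decide (¬ p ∣ x))).length

/-- Componentwise sum of two partitions (padding with zeros). -/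
def addP (a b : List ℕ) : List ℕ :=
  List.ofFn (fun i : Fin (max a.length b.length) => a.getD i 0 + b.getD i 0)

/-- `β_{l_1} + β_{l_2} + ⋯ + β_{l_h}` (componentwise sum). -/
def sumBeta (p : ℕ) (l : List ℕ) : List ℕ :=
  (l.map (beta p)).foldr addP []

/-- `Dominates a b` means `b ⊴ a`: each partial sum of `b` is at most that of `a`. -/
def Dominates (a b : List ℕ) : Prop :=
  ∀ r, (b.take r).sum ≤ (a.take r).sum

/-- Gap condition: `l_r - l_{r+1} ≥ p + δ_{p ∣ l_r}` for all consecutive parts. -/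
def Gap (p : ℕ) (l : List ℕ) : Prop :=
  ∀ r, r + 1 < l.length →
    l.getD (r+1) 0 + p + (if p ∣ l.getD r 0 then 1 else 0) ≤ l.getD r 0

/-- The residue of a node in column `s ≥ 1`: `min (c-1) (p-c)` where
`1 ≤ c ≤ p` and `s ≡ c (mod p)`. -/
def res (p s : ℕ) : ℕ :=
  min ((s - 1) % p) (p - 1 - (s - 1) % p)

/-- The content of a partition: the multiset of residues of all its nodes. -/
def content (p : ℕ) (l : List ℕ) : Multiset ℕ :=
  (l.map (fun part => ((List.range part).map (fun i => res p (i+1)) : Multiset ℕ))).sum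

/-- The partitions `μ_k` of Table I, where `n = b * p + c` with `0 ≤ c < p`. -/
def tableMu (p b c k : ℕ) : List ℕ :=
  if c = 0 then
    if k = 1 then List.replicate (b-2) p ++ [p-1, p-2, 2, 1]
    else List.replicate (b-1) p ++ [p-k, k]
  else if c = 1 then
    if k = 1 then List.replicate (b-1) p ++ [p-2, 2, 1]
    else List.replicate (b-1) p ++ [p+1-k, k]
  else if c ≤ p - 2 then
    if k ≤ (c+1)/2 - 1 then List.replicate b p ++ [c/2 + k, (c+1)/2 - k]
    else if k = (c+1)/2 then List.replicate (b-1) p ++ [p-1, c, 1]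
    else List.replicate (b-1) p ++ [p + (c+1)/2 - k, c/2 + k]
  else
    if k ≤ (p-1)/2 - 1 then List.replicate b p ++ [(p-1)/2 + k, (p-1)/2 - k]
    else List.replicate (b-1) p ++ [p-1, p-2, 2]

/-- for `p ≥ 3` and strict (at most two-part) partitions
`(λ₁, λ₂)` and `(μ₁, μ₂)` of `n` with `λ₁ - λ₂ ≥ p + δ_{p ∣ λ₁}` and
`μ₁ - μ₂ ≥ p + δ_{p ∣ μ₁}`, one has `β_{λ₁} + β_{λ₂} ⊴ β_{μ₁} + β_{μ₂}`
iff `λ₁ ≥ μ₁`. -/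
lemma getD_addP (x y : List ℕ) (i : ℕ) :
    (addP x y).getD i 0 = x.getD i 0 + y.getD i 0 := by
  unfold addP
  by_cases h : i < max x.length y.length
  · rw [List.getD_eq_getElem _ _ (by simpa using h)]
    simp
  · push_neg at h
    rw [List.getD_eq_default _ _ (by simpa using h),
        List.getD_eq_default _ _ (by omega),
        List.getD_eq_default _ _ (by omega)]

lemma take_sum_getD (l : List ℕ) (r : ℕ) :
    (l.take r).sum = ∑ i ∈ Finset.range r, l.getD i 0 := by
  induction l generalizing r with
  | nil => simp
  | cons a t ih =>
    cases r with
    | zero => simp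
    | succ n =>
      simp only [List.take_succ_cons, List.sum_cons, Finset.sum_range_succ',
        List.getD_cons_succ, List.getD_cons_zero, ih]
      omega

lemma addP_take_sum (x y : List ℕ) (r : ℕ) :
    ((addP x y).take r).sum = (x.take r).sum + (y.take r).sum := by
  rw [take_sum_getD, take_sum_getD, take_sum_getD, ← Finset.sum_add_distrib]
  exact Finset.sum_congr rfl fun i _ => getD_addP x y i

lemma beta_take_sum (p : ℕ) (hp : 0 < p) (a r : ℕ) :
    ((beta p a).take r).sum =
      min (r * p) a - (if p ∣ a ∧ a ≠ 0 ∧ r = a / p then 1 else 0) := by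
  rcases Nat.eq_zero_or_pos a with rfl | ha
  · simp [beta]
  by_cases hd : p ∣ a
  · obtain ⟨q, rfl⟩ := hd
    have hq : q ≠ 0 := by rintro rfl; simp at ha
    have hmod : (p * q) % p = 0 := Nat.mul_mod_right p q
    have hdiv : (p * q) / p = q := Nat.mul_div_cancel_left q hp
    have hbeta : beta p (p * q) = List.replicate (q - 1) p ++ [p - 1, 1] := by
      simp [beta, hmod, hdiv, ha.ne']
    rw [hbeta, List.take_append, List.take_replicate, List.sum_append,
        List.sum_replicate, List.length_replicate, smul_eq_mul]
    obtain ⟨q', rfl⟩ : ∃ q', q = q' + 1 := ⟨q - 1, by omega⟩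
    simp only [Nat.add_sub_cancel]
    rcases lt_trichotomy r (q' + 1) with hlt | rfl | hgt
    · rw [min_eq_left (by omega), if_neg (by rw [hdiv]; rintro ⟨-, -, h⟩; omega),
        show r - q' = 0 from by omega]
      have h1 : r * p ≤ p * (q' + 1) := by
        calc r * p ≤ (q' + 1) * p := Nat.mul_le_mul_right p hlt.le
        _ = p * (q' + 1) := mul_comm _ _
      simp [min_eq_left h1]
    · rw [min_eq_right (by omega), if_pos ⟨dvd_mul_right p _, ha.ne', hdiv.symm⟩,
        show q' + 1 - q' = 1 from by omega]
      have h1 : (q' + 1) * p = p * (q' + 1) := mul_comm _ _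
      rw [min_eq_right (le_of_eq h1.symm)]
      have h2 : p * (q' + 1) = q' * p + p := by ring
      simp only [List.take_succ_cons, List.take_zero, List.sum_cons, List.sum_nil]
      omega
    · rw [min_eq_right (by omega), if_neg (by rw [hdiv]; rintro ⟨-, -, h⟩; omega),
        List.take_of_length_le (by simp only [List.length_cons, List.length_nil]; omega)]
      have h1 : p * (q' + 1) ≤ r * p := by
        calc p * (q' + 1) = (q' + 1) * p := mul_comm _ _
        _ ≤ r * p := Nat.mul_le_mul_right p hgt.le
      rw [min_eq_right h1]
      have h2 : p * (q' + 1) = q' * p + p := by ring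
      simp only [List.sum_cons, List.sum_nil]
      omega
  · have hmod : a % p ≠ 0 := fun h => hd (Nat.dvd_of_mod_eq_zero h)
    have hbeta : beta p a = List.replicate (a / p) p ++ [a % p] := by
      simp [beta, hmod, ha.ne']
    rw [hbeta, List.take_append, List.take_replicate, List.sum_append,
        List.sum_replicate, List.length_replicate, smul_eq_mul,
        if_neg (fun h => hd h.1)]
    have hdm : a / p * p + a % p = a := Nat.div_add_mod' a p
    rcases le_or_gt r (a / p) with hle | hgt
    · rw [min_eq_left hle, show r - a / p = 0 from by omega]
      have h1 : r * p ≤ a := by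
        calc r * p ≤ (a / p) * p := Nat.mul_le_mul_right p hle
        _ ≤ a := Nat.div_mul_le_self a p
      simp [min_eq_left h1]
    · rw [min_eq_right hgt.le,
        List.take_of_length_le (by simp only [List.length_cons, List.length_nil]; omega)]
      have h1 : a ≤ r * p := by
        have h2 : (a / p + 1) * p ≤ r * p := Nat.mul_le_mul_right p hgt
        have h3 : (a / p + 1) * p = a / p * p + p := by ring
        have h4 : a % p < p := Nat.mod_lt _ hp
        omega
      simp only [List.sum_cons, List.sum_nil]
      rw [min_eq_right h1]
      omega

lemma key_le (t l1 l2 m1 m2 : ℕ) (hsum : l1 + l2 = m1 + m2) (h1 : m1 < l1) (h2 : m2 < m1)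
    (c1 c2 d1 d2 : ℕ)
    (hd1 : d1 = 0 ∨ (d1 = 1 ∧ t = m1)) (hd2 : d2 = 0 ∨ (d2 = 1 ∧ t = m2)) :
    (min t l1 - c1) + (min t l2 - c2) ≤ (min t m1 - d1) + (min t m2 - d2) := by
  omega

lemma key_forward (t l1 l2 m1 m2 : ℕ) (hsum : l1 + l2 = m1 + m2) (h1 : l1 < m1)
    (htl2 : l2 < t) (htl1 : t ≤ l1) :
    ¬ (min t l1 + min t l2 ≤ min t m1 + min t m2) := by
  omega

theorem stmt14 (p n l1 l2 m1 m2 : ℕ) (hp : 3 ≤ p)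
    (hln : l1 + l2 = n) (hmn : m1 + m2 = n)
    (hl : l2 < l1) (hm : m2 < m1)
    (hgl : l2 + p + (if p ∣ l1 then 1 else 0) ≤ l1)
    (hgm : m2 + p + (if p ∣ m1 then 1 else 0) ≤ m1) :
    Dominates (addP (beta p m1) (beta p m2)) (addP (beta p l1) (beta p l2)) ↔
      m1 ≤ l1 := by
  have hp0 : 0 < p := by omega
  constructor
  · intro hdom
    by_contra hcon
    push_neg at hcon
    have hm2l2 : m2 < l2 := by omega
    have hdr := hdom (l2 / p + 1)
    rw [addP_take_sum, addP_take_sum, beta_take_sum p hp0, beta_take_sum p hp0,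
        beta_take_sum p hp0, beta_take_sum p hp0] at hdr
    have hup : l2 / p * p ≤ l2 := Nat.div_mul_le_self l2 p
    have hX : (l2 / p + 1) * p = l2 / p * p + p := by ring
    have hub : (l2 / p + 1) * p ≤ l2 + p := by omega
    have hlow : l2 < (l2 / p + 1) * p := by
      have h2 : l2 % p < p := Nat.mod_lt _ hp0
      have h3 := Nat.div_add_mod' l2 p
      omega
    have hl2p : l2 + p ≤ l1 := le_trans (Nat.le_add_right _ _) hgl
    have hn1 : ¬ (p ∣ l1 ∧ l1 ≠ 0 ∧ l2 / p + 1 = l1 / p) := by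
      rintro ⟨hdd, -, hr⟩
      have h1 : l1 = (l2 / p + 1) * p := by rw [hr, Nat.div_mul_cancel hdd]
      rw [if_pos hdd] at hgl
      omega
    have hn2 : ¬ (p ∣ l2 ∧ l2 ≠ 0 ∧ l2 / p + 1 = l2 / p) := by
      rintro ⟨-, -, hr⟩; omega
    have hn3 : ¬ (p ∣ m1 ∧ m1 ≠ 0 ∧ l2 / p + 1 = m1 / p) := by
      rintro ⟨hdd, -, hr⟩
      have h1 : m1 = (l2 / p + 1) * p := by rw [hr, Nat.div_mul_cancel hdd]
      omega
    have hn4 : ¬ (p ∣ m2 ∧ m2 ≠ 0 ∧ l2 / p + 1 = m2 / p) := by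
      rintro ⟨hdd, -, hr⟩
      have h1 : m2 = (l2 / p + 1) * p := by rw [hr, Nat.div_mul_cancel hdd]
      omega
    rw [if_neg hn1, if_neg hn2, if_neg hn3, if_neg hn4] at hdr
    simp only [Nat.sub_zero] at hdr
    exact key_forward ((l2 / p + 1) * p) l1 l2 m1 m2 (by omega) hcon hlow
      (le_trans hub hl2p) hdr
  · intro hml
    rcases eq_or_lt_of_le hml with heq | hlt
    · have h2 : l2 = m2 := by omega
      subst heq; subst h2
      exact fun r => le_rfl
    · intro r
      rw [addP_take_sum, addP_take_sum, beta_take_sum p hp0, beta_take_sum p hp0,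
          beta_take_sum p hp0, beta_take_sum p hp0]
      refine key_le (r * p) l1 l2 m1 m2 (by omega) hlt hm _ _ _ _ ?_ ?_
      · by_cases h : p ∣ m1 ∧ m1 ≠ 0 ∧ r = m1 / p
        · refine Or.inr ⟨if_pos h, ?_⟩
          rw [h.2.2, Nat.div_mul_cancel h.1]
        · exact Or.inl (if_neg h)
      · by_cases h : p ∣ m2 ∧ m2 ≠ 0 ∧ r = m2 / p
        · refine Or.inr ⟨if_pos h, ?_⟩
          rw [h.2.2, Nat.div_mul_cancel h.1]
        · exact Or.inl (if_neg h)
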